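/- Let k ≥ 2 and n be positive integers with Ω(2^n − 1) < log n / log k. Then there exists a prime q dividing 2^n − 1 such that every positive multiple of q has Hamming weight at least k + 1. -/

import Mathlib

private def w (m : ℕ) : ℕ := (Nat.digits 2 m).count 1

private lemma w_eq (m : ℕ) : w m = w (m / 2) + m % 2 := by
  rcases Nat.eq_zero_or_pos m with h | h
  · subst h; simp [w]
  · rw [w, Nat.digits_def' (by norm_num : 1 < 2) h, List.count_cons]
    rcases Nat.mod_two_eq_zero_or_one m with h2 | h2 <;> simp [h2, w]

private lemma w_two_mul_add (x r : ℕ) (hr : r < 2) : w (2 * x + r) = w x + r := by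
  rw [w_eq]
  have h1 : (2 * x + r) / 2 = x := by omega
  have h2 : (2 * x + r) % 2 = r := by omega
  rw [h1, h2]

private lemma w_add_aux : ∀ s, ∀ a b : ℕ, a + b ≤ s → w (a + b) ≤ w a + w b := by
  intro s
  induction s with
  | zero =>
    intro a b h
    have : a = 0 ∧ b = 0 := by omega
    simp [this.1, this.2]
  | succ s ih =>
    intro a b hab
    rcases Nat.eq_zero_or_pos a with ha | ha
    · subst ha; simp
    rcases Nat.eq_zero_or_pos b with hb | hb
    · subst hb; simp
    have hwa : w a = w (a / 2) + a % 2 := w_eq a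
    have hwb : w b = w (b / 2) + b % 2 := w_eq b
    rcases Nat.mod_two_eq_zero_or_one a with ha2 | ha2 <;>
      rcases Nat.mod_two_eq_zero_or_one b with hb2 | hb2
    · have hsum : a + b = 2 * (a / 2 + b / 2) + 0 := by omega
      rw [hsum, w_two_mul_add _ _ (by norm_num)]
      have := ih (a / 2) (b / 2) (by omega)
      omega
    · have hsum : a + b = 2 * (a / 2 + b / 2) + 1 := by omega
      rw [hsum, w_two_mul_add _ _ (by norm_num)]
      have := ih (a / 2) (b / 2) (by omega)
      omega
    · have hsum : a + b = 2 * (a / 2 + b / 2) + 1 := by omega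
      rw [hsum, w_two_mul_add _ _ (by norm_num)]
      have := ih (a / 2) (b / 2) (by omega)
      omega
    · have hsum : a + b = 2 * (a / 2 + b / 2 + 1) + 0 := by omega
      rw [hsum, w_two_mul_add _ _ (by norm_num)]
      have h1 : w (a / 2 + b / 2 + 1) ≤ w (a / 2 + b / 2) + w 1 := ih _ 1 (by omega)
      have h2 : w (a / 2 + b / 2) ≤ w (a / 2) + w (b / 2) := ih _ _ (by omega)
      have h3 : w 1 = 1 := by simp [w]
      omega

private lemma w_add (a b : ℕ) : w (a + b) ≤ w a + w b := w_add_aux (a + b) a b le_rfl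

private lemma w_mul : ∀ a b : ℕ, w (a * b) ≤ w a * w b := by
  intro a
  induction a using Nat.strong_induction_on with
  | _ a ih =>
    intro b
    rcases Nat.eq_zero_or_pos a with ha | ha
    · subst ha; simp [w]
    have hwa : w a = w (a / 2) + a % 2 := w_eq a
    rcases Nat.mod_two_eq_zero_or_one a with ha2 | ha2
    · have hab : a * b = 2 * (a / 2 * b) + 0 := by
        have : a = 2 * (a / 2) := by omega
        calc a * b = 2 * (a / 2) * b := by rw [← this]
          _ = 2 * (a / 2 * b) + 0 := by ring
      rw [hab, w_two_mul_add _ _ (by norm_num)]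
      have h2 : w a = w (a / 2) := by omega
      rw [h2]
      have h1 := ih (a / 2) (by omega) b
      omega
    · have hab : a * b = 2 * (a / 2 * b) + b := by
        have : a = 2 * (a / 2) + 1 := by omega
        calc a * b = (2 * (a / 2) + 1) * b := by rw [← this]
          _ = 2 * (a / 2 * b) + b := by ring
      rw [hab]
      calc w (2 * (a / 2 * b) + b) ≤ w (2 * (a / 2 * b)) + w b := w_add _ _
        _ = w (a / 2 * b) + w b := by
            have := w_two_mul_add (a / 2 * b) 0 (by norm_num); simpa using this
        _ ≤ w (a / 2) * w b + w b := by
            have := ih (a / 2) (by omega) b; omega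
        _ = w a * w b := by rw [hwa, ha2]; ring

private lemma w_split : ∀ n a b : ℕ, b < 2 ^ n → w (2 ^ n * a + b) = w a + w b := by
  intro n
  induction n with
  | zero =>
    intro a b hb
    have : b = 0 := by omega
    subst this
    simp [w]
  | succ n ih =>
    intro a b hb
    have hp : 2 ^ (n + 1) = 2 * 2 ^ n := by ring
    have key : 2 ^ (n + 1) * a + b = 2 * (2 ^ n * a + b / 2) + b % 2 := by
      rw [hp]; ring_nf; omega
    rw [key, w_two_mul_add _ _ (by omega),
        ih a (b / 2) (by omega)]
    have := w_eq b
    omega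

private lemma w_pow_sub_one : ∀ n : ℕ, w (2 ^ n - 1) = n := by
  intro n
  induction n with
  | zero => simp [w]
  | succ n ih =>
    have h1 : 1 ≤ 2 ^ n := Nat.one_le_two_pow
    have hp : 2 ^ (n + 1) = 2 * 2 ^ n := by ring
    have key : 2 ^ (n + 1) - 1 = 2 * (2 ^ n - 1) + 1 := by omega
    rw [key, w_two_mul_add _ _ (by norm_num), ih]

private lemma n_le_w (n : ℕ) (hn : 0 < n) : ∀ m, 0 < m → (2 ^ n - 1) ∣ m → n ≤ w m := by
  intro m
  induction m using Nat.strong_induction_on with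
  | _ m ih =>
    intro hm hdvd
    have h2n : 2 ≤ 2 ^ n := by
      calc 2 = 2 ^ 1 := by norm_num
        _ ≤ 2 ^ n := Nat.pow_le_pow_right (by norm_num) hn
    obtain ⟨c, hc⟩ := hdvd
    match c, hc with
    | 0, hc => omega
    | 1, hc => rw [hc]; simp [w_pow_sub_one]
    | (c + 2), hc =>
      have hm2 : 2 ^ n ≤ m := by
        have : (2 ^ n - 1) * 2 ≤ (2 ^ n - 1) * (c + 2) := by
          apply Nat.mul_le_mul_left; omega
        omega
      set a := m / 2 ^ n with hadef
      set b := m % 2 ^ n with hbdef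
      have hb : b < 2 ^ n := Nat.mod_lt _ (by omega)
      have hab : m = 2 ^ n * a + b := (Nat.div_add_mod m (2 ^ n)).symm
      have ha : 1 ≤ a := by
        rw [hadef]
        exact Nat.one_le_div_iff (by omega) |>.mpr hm2
      have haX : 2 * a ≤ 2 ^ n * a := Nat.mul_le_mul_right a h2n
      have hsub : m - (a + b) = (2 ^ n - 1) * a := by
        have h1 : (2 ^ n - 1) * a = 2 ^ n * a - a := by
          rw [Nat.sub_mul]; omega
        omega
      have hd2 : (2 ^ n - 1) ∣ (a + b) := by
        have heq : a + b = m - (2 ^ n - 1) * a := by omega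
        rw [heq]
        exact Nat.dvd_sub ⟨c + 2, hc⟩ (dvd_mul_right _ _)
      have hlt : a + b < m := by omega
      have hpos : 0 < a + b := by omega
      calc n ≤ w (a + b) := ih _ hlt hpos hd2
        _ ≤ w a + w b := w_add _ _
        _ = w m := by rw [hab]; exact (w_split n a b hb).symm

private lemma exists_mult (k : ℕ) : ∀ l : List ℕ,
    (∀ q ∈ l, ∃ m, 0 < m ∧ q ∣ m ∧ w m ≤ k) →
    ∃ M, 0 < M ∧ l.prod ∣ M ∧ w M ≤ k ^ l.length := by
  intro l
  induction l with
  | nil => intro _; exact ⟨1, one_pos, by simp, by simp [w]⟩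
  | cons q t ih =>
    intro h
    obtain ⟨m, hm0, hqm, hwm⟩ := h q List.mem_cons_self
    obtain ⟨M, hM0, hdvd, hwM⟩ := ih (fun r hr => h r (List.mem_cons_of_mem _ hr))
    refine ⟨m * M, Nat.mul_pos hm0 hM0, by simpa using mul_dvd_mul hqm hdvd, ?_⟩
    calc w (m * M) ≤ w m * w M := w_mul m M
      _ ≤ k * k ^ t.length := Nat.mul_le_mul hwm hwM
      _ = k ^ (q :: t).length := by rw [List.length_cons, pow_succ]; ring

theorem stmt_2 (k n : ℕ) (hk : 2 ≤ k) (hn : 0 < n)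
    (hΩ : ((2 ^ n - 1).primeFactorsList.length : ℝ) < Real.log n / Real.log k) :
    ∃ q : ℕ, q.Prime ∧ q ∣ 2 ^ n - 1 ∧
      ∀ m : ℕ, 0 < m → q ∣ m → k + 1 ≤ (Nat.digits 2 m).count 1 := by
  by_contra hcon
  push_neg at hcon
  set N := 2 ^ n - 1 with hN
  have h2n : 2 ≤ 2 ^ n := by
    calc 2 = 2 ^ 1 := by norm_num
      _ ≤ 2 ^ n := Nat.pow_le_pow_right (by norm_num) hn
  have hN1 : 1 ≤ N := by omega
  have hall : ∀ q ∈ N.primeFactorsList, ∃ m, 0 < m ∧ q ∣ m ∧ w m ≤ k := by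
    intro q hq
    obtain ⟨m, h1, h2, h3⟩ := hcon q (Nat.prime_of_mem_primeFactorsList hq)
      (Nat.dvd_of_mem_primeFactorsList hq)
    exact ⟨m, h1, h2, by
      have : (Nat.digits 2 m).count 1 ≤ k := by omega
      exact this⟩
  obtain ⟨M, hM0, hdvd, hwM⟩ := exists_mult k _ hall
  rw [Nat.prod_primeFactorsList (by omega : N ≠ 0)] at hdvd
  have hnle : n ≤ w M := n_le_w n hn M hM0 hdvd
  have hle : n ≤ k ^ N.primeFactorsList.length := le_trans hnle hwM
  set L := N.primeFactorsList.length with hL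
  have hk1 : (1 : ℝ) < (k : ℝ) := by exact_mod_cast lt_of_lt_of_le one_lt_two hk
  have hlogk : 0 < Real.log k := Real.log_pos hk1
  have hlog : Real.log n ≤ L * Real.log k := by
    calc Real.log n ≤ Real.log ((k : ℝ) ^ L) := by
          apply Real.log_le_log (by exact_mod_cast hn)
          exact_mod_cast hle
      _ = L * Real.log k := by rw [Real.log_pow]
  have hfin : Real.log n / Real.log k ≤ (L : ℝ) := by
    rw [div_le_iff₀ hlogk]; linarith
  linarith
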